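/- The samples of the PBL signal are uniquely identifiable up to an integer constant vector from the modulo samples if and only if for every divisor d of N with d > 1, there exists n with P+1 ≤ n ≤ N−P−1 such that exp(2πi·n/N) is a root of the d-th cyclotomic polynomial Φ_d (equivalently, exp(2πi·n/N) is a primitive d-th root of unity). -/

import Mathlib

open Polynomial Finset

/-- `y : Fin N → ℝ` is a length-`N` sample vector of a periodic bandlimited signal with
`P` harmonics: `y n = ∑_{p=-P}^{P} c p · exp(2πi·n·p/N)` with `c (-p) = conj (c p)`. -/
def IsPBLSample (P N : ℕ) (y : Fin N → ℝ) : Prop :=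
  ∃ c : ℤ → ℂ, (∀ p : ℤ, c (-p) = (starRingEnd ℂ) (c p)) ∧
    ∀ n : Fin N, (y n : ℂ) =
      ∑ p ∈ Finset.Icc (-(P : ℤ)) (P : ℤ),
        c p * Complex.exp (2 * Real.pi * Complex.I * (n : ℕ) * p / N)

/-- The samples of the PBL signal are uniquely identifiable up to an integer constant
vector from the modulo samples: any two PBL sample vectors differing by an integer
vector differ by a constant integer vector. -/
def PBLIdentifiable (P N : ℕ) : Prop :=
  ∀ y y' : Fin N → ℝ, IsPBLSample P N y → IsPBLSample P N y' →
    (∀ n : Fin N, ∃ k : ℤ, y n - y' n = k) →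
    ∃ c : ℤ, ∀ n : Fin N, y n - y' n = c


noncomputable def ww (N : ℕ) : ℂ := Complex.exp (2 * Real.pi * Complex.I / N)

lemma ww_exp (N : ℕ) (m : ℤ) : Complex.exp (2 * Real.pi * Complex.I * m / N) = ww N ^ m := by
  rw [ww, ← Complex.exp_int_mul]
  congr 1
  ring

lemma ww_prim (N : ℕ) (hN : N ≠ 0) : IsPrimitiveRoot (ww N) N :=
  Complex.isPrimitiveRoot_exp N hN

lemma sum_pow_root {N : ℕ} (ζ : ℂ) (h : ζ ^ N = 1) :
    ∑ n ∈ range N, ζ ^ n = if ζ = 1 then (N : ℂ) else 0 := by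
  split_ifs with h1
  · simp [h1]
  · rw [geom_sum_eq h1, h, sub_self, zero_div]

lemma shift_sum {t : ℤ → ℂ} {N : ℕ} (ht : ∀ p : ℤ, t (p + N) = t p) (a : ℤ) :
    ∑ k ∈ range N, t (a + k) = ∑ k ∈ range N, t k := by
  have key : ∀ b : ℤ, ∑ k ∈ range N, t (b + 1 + k) = ∑ k ∈ range N, t (b + k) := by
    intro b
    have h1 := Finset.sum_range_succ' (fun k : ℕ => t (b + k)) N
    have h2 := Finset.sum_range_succ (fun k : ℕ => t (b + k)) N
    have h3 : ∑ k ∈ range N, t (b + 1 + k) = ∑ k ∈ range N, t (b + (k + 1)) := by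
      apply Finset.sum_congr rfl; intro k _; congr 1; push_cast; ring
    have h4 : t (b + N) = t b := ht b
    simp only [Nat.cast_add, Nat.cast_one] at h1 h2 ⊢
    rw [h3]
    have := h1.symm.trans h2
    simp only [Nat.cast_zero, add_zero] at this
    linear_combination this + h4
  induction a using Int.induction_on with
  | zero => simp
  | succ n ih => rw [key n, ih]
  | pred n ih => rw [← ih, ← key (-n - 1)]; apply Finset.sum_congr rfl; intro k _; congr 2; ring

lemma sum_shift_int (a : ℤ) (m : ℕ) (f : ℤ → ℂ) :
    ∑ p ∈ Finset.Icc a (a + (m : ℤ)), f p = ∑ k ∈ range (m + 1), f (a + k) := by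
  apply Finset.sum_nbij' (i := fun p => (p - a).toNat) (j := fun k => a + (k : ℤ))
  · intro p hp; simp only [Finset.mem_Icc] at hp; simp only [Finset.mem_range]; omega
  · intro k hk; simp only [Finset.mem_range] at hk; simp only [Finset.mem_Icc]; omega
  · intro p hp; simp only [Finset.mem_Icc] at hp; omega
  · intro k hk; simp only [Finset.mem_range] at hk; omega
  · intro p hp; simp only [Finset.mem_Icc] at hp; congr 1; omega

lemma ww_ne_zero (N : ℕ) : ww N ≠ 0 := Complex.exp_ne_zero _

lemma pbl_gap {P N : ℕ} (hN : 2 * P + 1 < N) {y : Fin N → ℝ} (hy : IsPBLSample P N y)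
    {k : ℕ} (hk1 : P + 1 ≤ k) (hk2 : k ≤ N - P - 1) :
    ∑ n : Fin N, (y n : ℂ) * ww N ^ ((n : ℕ) * k) = 0 := by
  have hN0 : N ≠ 0 := by omega
  have hprim := ww_prim N hN0
  have hw0 := ww_ne_zero N
  obtain ⟨c, -, hrep⟩ := hy
  have hexp : ∀ (n : ℕ) (p : ℤ), Complex.exp (2 * Real.pi * Complex.I * n * p / N)
      = ww N ^ ((n : ℤ) * p) := by
    intro n p; rw [← ww_exp]; congr 1; push_cast; ring
  have step1 : ∀ n : Fin N, (y n : ℂ) * ww N ^ ((n : ℕ) * k)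
      = ∑ p ∈ Finset.Icc (-(P : ℤ)) P, c p * (ww N ^ ((p + k : ℤ))) ^ (n : ℕ) := by
    intro n
    rw [hrep n, Finset.sum_mul]
    apply Finset.sum_congr rfl
    intro p _
    rw [hexp, mul_assoc]
    congr 1
    rw [← zpow_natCast (ww N) ((n : ℕ) * k), ← zpow_add₀ hw0,
      ← zpow_natCast (ww N ^ ((p + k : ℤ))) (n : ℕ), ← zpow_mul]
    congr 1
    push_cast
    ring
  rw [Finset.sum_congr rfl (fun n _ => step1 n), Finset.sum_comm]
  apply Finset.sum_eq_zero
  intro p hp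
  simp only [Finset.mem_Icc] at hp
  have hζN : (ww N ^ ((p + k : ℤ))) ^ N = 1 := by
    rw [← zpow_natCast, ← zpow_mul, mul_comm, zpow_mul, zpow_natCast, hprim.pow_eq_one,
      one_zpow]
  have hζ1 : ww N ^ ((p + k : ℤ)) ≠ 1 := by
    rw [Ne, hprim.zpow_eq_one_iff_dvd]
    intro hdvd
    rcases hdvd with ⟨e, he⟩
    have : 0 < p + (k : ℤ) := by omega
    have h2 : p + (k : ℤ) < N := by omega
    have hNpos : (0:ℤ) < N := by exact_mod_cast Nat.pos_of_ne_zero hN0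
    have he1 : 0 < e := by nlinarith
    have he2 : e < 1 := by nlinarith
    omega
  rw [← Finset.mul_sum]
  rw [Fin.sum_univ_eq_sum_range (fun n => (ww N ^ ((p + k : ℤ))) ^ n) N]
  rw [sum_pow_root _ hζN, if_neg hζ1, mul_zero]

lemma backward_dir {P N : ℕ} (hP : 1 ≤ P) (hN : 2 * P + 1 < N)
    (hcond : ∀ d : ℕ, d ∣ N → 1 < d →
      ∃ n : ℕ, P + 1 ≤ n ∧ n ≤ N - P - 1 ∧
        (Polynomial.cyclotomic d ℂ).IsRoot
          (Complex.exp (2 * Real.pi * Complex.I * n / N))) :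
    PBLIdentifiable P N := by
  have hN0 : N ≠ 0 := by omega
  have hNpos : 0 < N := by omega
  intro y y' hy hy' hint
  choose a ha using hint
  set a' : ℕ → ℤ := fun m => if h : m < N then a ⟨m, h⟩ else 0 with ha'
  set F : ℚ[X] := ∑ m ∈ range N, monomial m ((a' m : ℚ)) with hF
  have hcoeff : ∀ m : ℕ, F.coeff m = if m < N then (a' m : ℚ) else 0 := by
    intro m
    rw [hF, finset_sum_coeff]
    simp only [coeff_monomial]
    rw [Finset.sum_ite_eq' (range N) m (fun n => ((a' n : ℚ)))]
    simp [Finset.mem_range]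
  have heval : ∀ k : ℕ, P + 1 ≤ k → k ≤ N - P - 1 →
      Polynomial.aeval ((ww N) ^ k) F = 0 := by
    intro k hk1 hk2
    have step : Polynomial.aeval ((ww N) ^ k) F
        = ∑ n : Fin N, ((y n : ℂ) - (y' n : ℂ)) * ww N ^ ((n : ℕ) * k) := by
      rw [hF, map_sum, Finset.sum_range (fun m => (Polynomial.aeval ((ww N) ^ k)
        (monomial m ((a' m : ℚ)))))]
      apply Finset.sum_congr rfl
      intro n _
      rw [aeval_monomial]
      have h1 : a' (n : ℕ) = a n := by
        rw [ha']
        simp only [n.isLt, dif_pos]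
      have h2 : ((a n : ℝ) : ℂ) = (y n : ℂ) - (y' n : ℂ) := by
        rw [← ha n]; push_cast; ring
      rw [h1]
      have h3 : (algebraMap ℚ ℂ) ((a n : ℚ)) = (y n : ℂ) - (y' n : ℂ) := by
        simp only [show ((a n : ℚ)) = ((a n : ℤ) : ℚ) from rfl, map_intCast]
        rw [← h2]
        push_cast
        ring
      rw [h3, ← pow_mul, mul_comm k (n : ℕ)]
    have g1 := pbl_gap hN hy hk1 hk2
    have g2 := pbl_gap hN hy' hk1 hk2
    rw [step]
    calc ∑ n : Fin N, ((y n : ℂ) - (y' n : ℂ)) * ww N ^ ((n : ℕ) * k)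
        = (∑ n : Fin N, (y n : ℂ) * ww N ^ ((n : ℕ) * k))
          - ∑ n : Fin N, (y' n : ℂ) * ww N ^ ((n : ℕ) * k) := by
          rw [← Finset.sum_sub_distrib]
          apply Finset.sum_congr rfl
          intro n _
          ring
      _ = 0 := by rw [g1, g2, sub_zero]
  have hdvd : ∀ d ∈ N.divisors.erase 1, cyclotomic d ℚ ∣ F := by
    intro d hd
    rw [Finset.mem_erase, Nat.mem_divisors] at hd
    obtain ⟨hd1, hdN, -⟩ := hd
    have hd0 : d ≠ 0 := by rintro rfl; exact hN0 (Nat.eq_zero_of_zero_dvd hdN)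
    have hd2 : 1 < d := by omega
    obtain ⟨n, hn1, hn2, hroot⟩ := hcond d hdN hd2
    have hμ : Complex.exp (2 * Real.pi * Complex.I * n / N) = ww N ^ n := by
      rw [show ((n : ℕ) : ℂ) = (((n : ℤ)) : ℂ) by push_cast; ring, ww_exp, zpow_natCast]
    rw [hμ] at hroot
    haveI : NeZero d := ⟨hd0⟩
    have hprim : IsPrimitiveRoot (ww N ^ n) d := isRoot_cyclotomic_iff.mp hroot
    rw [cyclotomic_eq_minpoly_rat hprim (by omega)]
    exact minpoly.dvd ℚ _ (heval n hn1 hn2)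
  have hGdvd : (∑ i ∈ range N, (X : ℚ[X]) ^ i) ∣ F := by
    rw [← prod_cyclotomic_eq_geom_sum hNpos ℚ]
    exact Finset.prod_dvd_of_coprime (fun x _ z _ hxz => cyclotomic.isCoprime_rat hxz) hdvd
  set G : ℚ[X] := ∑ i ∈ range N, (X : ℚ[X]) ^ i with hG
  have hGcoeff : ∀ m : ℕ, G.coeff m = if m < N then 1 else 0 := by
    intro m
    rw [hG, finset_sum_coeff]
    simp only [coeff_X_pow]
    rw [Finset.sum_ite_eq (range N) m (fun _ => (1 : ℚ))]
    simp [Finset.mem_range]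
  have hGne : G ≠ 0 := by
    intro h
    have h2 := hGcoeff (N - 1)
    rw [h] at h2
    simp only [coeff_zero] at h2
    rw [if_pos (by omega)] at h2
    exact zero_ne_one h2
  have hFco : ∀ m : ℕ, N ≤ m → F.coeff m = 0 := by
    intro m hm
    rw [hcoeff m, if_neg (by omega)]
  obtain ⟨q, hFq⟩ := hGdvd
  have hGnd : G.natDegree = N - 1 := by
    apply le_antisymm
    · apply natDegree_le_iff_coeff_eq_zero.mpr
      intro m hm
      rw [hGcoeff m, if_neg (by omega)]
    · apply le_natDegree_of_ne_zero
      rw [hGcoeff (N - 1), if_pos (by omega)]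
      exact one_ne_zero
  by_cases hq0 : q = 0
  · refine ⟨0, fun n => ?_⟩
    have hF0 : F = 0 := by rw [hFq, hq0, mul_zero]
    have h2 := hcoeff (n : ℕ)
    rw [hF0] at h2
    simp only [coeff_zero, n.isLt, if_pos] at h2
    have h3 : a' (n : ℕ) = 0 := by exact_mod_cast h2.symm
    have h4 : a' (n : ℕ) = a n := by simp only [ha', n.isLt, dif_pos]
    rw [ha n, h4.symm.trans h3]
  · have hFne : F ≠ 0 := by rw [hFq]; exact mul_ne_zero hGne hq0
    have hFnd : F.natDegree < N := by
      rw [natDegree_lt_iff_degree_lt hFne]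
      rw [degree_lt_iff_coeff_zero]
      exact fun m hm => hFco m (by exact_mod_cast hm)
    have hdegs : G.natDegree + q.natDegree = F.natDegree := by
      rw [hFq, natDegree_mul hGne hq0]
    have hqd : q.natDegree = 0 := by omega
    have hr := Polynomial.eq_C_of_natDegree_eq_zero hqd
    set r := q.coeff 0 with hrdef
    have key : ∀ m : ℕ, m < N → (a' m : ℚ) = r := by
      intro m hm
      have h1 := hcoeff m
      rw [hFq, hr, coeff_mul_C, hGcoeff m, if_pos hm, one_mul, if_pos hm] at h1
      exact h1.symm
    refine ⟨a' 0, fun n => ?_⟩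
    have e1 : (a' (n : ℕ) : ℚ) = (a' 0 : ℚ) := by rw [key _ n.isLt, key 0 hNpos]
    have e2 : a' (n : ℕ) = a' 0 := by exact_mod_cast e1
    have h4 : a' (n : ℕ) = a n := by simp only [ha', n.isLt, dif_pos]
    rw [ha n, ← h4, e2]

lemma ww_exp_nat (N : ℕ) (n : ℕ) (p : ℤ) :
    Complex.exp (2 * Real.pi * Complex.I * n * p / N) = ww N ^ ((n : ℤ) * p) := by
  rw [← ww_exp]; congr 1; push_cast; ring

lemma ww_conj (N : ℕ) (m : ℤ) : (starRingEnd ℂ) (ww N ^ m) = ww N ^ (-m) := by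
  rw [map_zpow₀]
  have h : (starRingEnd ℂ) (ww N) = ww N ^ (-1 : ℤ) := by
    have h2 : ww N ^ (-1 : ℤ) = Complex.exp (2 * Real.pi * Complex.I * ((-1 : ℤ) : ℂ) / N) :=
      (ww_exp N (-1)).symm
    rw [h2, ww, ← Complex.exp_conj]
    congr 1
    rw [map_div₀]
    push_cast
    simp only [map_mul, Complex.conj_I, map_ofNat, Complex.conj_ofReal, map_natCast]
    ring
  rw [h, ← zpow_mul]
  congr 1
  ring

lemma forward_dir {P N : ℕ} (hP : 1 ≤ P) (hN : 2 * P + 1 < N) (hid : PBLIdentifiable P N) :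
    ∀ d : ℕ, d ∣ N → 1 < d →
      ∃ n : ℕ, P + 1 ≤ n ∧ n ≤ N - P - 1 ∧
        (Polynomial.cyclotomic d ℂ).IsRoot
          (Complex.exp (2 * Real.pi * Complex.I * n / N)) := by
  intro d hdN hd2
  by_contra hcon
  push_neg at hcon
  have hN0 : N ≠ 0 := by omega
  have hNpos : 0 < N := by omega
  have hprim := ww_prim N hN0
  have hw0 := ww_ne_zero N
  have hwN : ww N ^ (N : ℤ) = 1 := by rw [zpow_natCast, hprim.pow_eq_one]
  have hd0 : d ≠ 0 := by omega
  have hd_mem : d ∈ N.divisors := Nat.mem_divisors.mpr ⟨hdN, hN0⟩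
  set g : ℤ[X] := ∏ e ∈ N.divisors.erase d, cyclotomic e ℤ with hg
  set gC : ℂ[X] := ∏ e ∈ N.divisors.erase d, cyclotomic e ℂ with hgC
  have hmap : g.map (Int.castRingHom ℂ) = gC := by
    rw [hg, hgC, Polynomial.map_prod]
    exact Finset.prod_congr rfl fun e _ => map_cyclotomic_int e ℂ
  have hmul : cyclotomic d ℂ * gC = X ^ N - 1 := by
    rw [← prod_cyclotomic_eq_X_pow_sub_one hNpos ℂ, hgC]
    exact Finset.mul_prod_erase N.divisors (fun e => cyclotomic e ℂ) hd_mem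
  have hcyc_ne : cyclotomic d ℂ ≠ 0 := (cyclotomic.monic d ℂ).ne_zero
  have hgC_ne : gC ≠ 0 := by
    rw [hgC]
    exact Finset.prod_ne_zero_iff.mpr fun e _ => (cyclotomic.monic e ℂ).ne_zero
  have hgClt : gC.natDegree < N := by
    have h1 : (cyclotomic d ℂ * gC).natDegree = N := by
      rw [hmul]
      have := natDegree_X_pow_sub_C (n := N) (r := (1 : ℂ))
      simpa using this
    rw [natDegree_mul hcyc_ne hgC_ne, natDegree_cyclotomic] at h1
    have ht : 0 < d.totient := Nat.totient_pos.mpr (by omega)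
    omega
  have hcoeffC : ∀ m : ℕ, gC.coeff m = ((g.coeff m : ℤ) : ℂ) := by
    intro m
    rw [← hmap, coeff_map]
    simp
  -- gap vanishing
  have hgap : ∀ k : ℕ, P + 1 ≤ k → k ≤ N - P - 1 → gC.eval (ww N ^ k) = 0 := by
    intro k hk1 hk2
    have hx : ((ww N ^ k) ^ N - 1 : ℂ) = 0 := by
      rw [← pow_mul, mul_comm, pow_mul, hprim.pow_eq_one, one_pow, sub_self]
    have he : (cyclotomic d ℂ).eval (ww N ^ k) * gC.eval (ww N ^ k) = 0 := by
      rw [← eval_mul, hmul]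
      simp [hx]
    have hne : (cyclotomic d ℂ).eval (ww N ^ k) ≠ 0 := by
      have := hcon k hk1 hk2
      rw [show Complex.exp (2 * Real.pi * Complex.I * k / N) = ww N ^ k by
        rw [show ((k : ℕ) : ℂ) = (((k : ℤ)) : ℂ) by push_cast; ring, ww_exp, zpow_natCast]] at this
      exact this
    exact (mul_eq_zero.mp he).resolve_left hne
  have hconj : ∀ x : ℂ, (starRingEnd ℂ) (gC.eval x) = gC.eval ((starRingEnd ℂ) x) := by
    intro x
    rw [← hmap, eval_map, eval_map, hom_eval₂]
    congr 1
    exact RingHom.ext_int _ _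
  set y : Fin N → ℝ := fun n => ((g.coeff (n : ℕ) : ℤ) : ℝ) with hy
  have hyPBL : IsPBLSample P N y := by
    refine ⟨fun p => gC.eval (ww N ^ (-p)) / N, ?_, ?_⟩
    · intro p
      simp only
      rw [map_div₀, map_natCast, hconj, ww_conj, neg_neg]
    · intro n
      set t : ℤ → ℂ := fun p => gC.eval (ww N ^ (-p)) * ww N ^ (((n : ℕ) : ℤ) * p) with htdef
      have ht_per : ∀ p : ℤ, t (p + N) = t p := by
        intro p
        simp only [htdef]
        have hNeg : ww N ^ (-(N : ℤ)) = 1 := by rw [zpow_neg, hwN, inv_one]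
        have e1 : ww N ^ (-(p + (N : ℤ))) = ww N ^ (-p) := by
          rw [show -(p + (N : ℤ)) = -p + -(N : ℤ) by ring, zpow_add₀ hw0, hNeg, mul_one]
        have h3 : ww N ^ ((((n : ℕ) : ℤ)) * (N : ℤ)) = 1 := by
          rw [mul_comm, zpow_mul, hwN, one_zpow]
        have e2 : ww N ^ (((n : ℕ) : ℤ) * (p + (N : ℤ))) = ww N ^ (((n : ℕ) : ℤ) * p) := by
          rw [mul_add, zpow_add₀ hw0, h3, mul_one]
        rw [e1, e2]
      have ht_gap : ∀ p : ℤ, (P : ℤ) + 1 ≤ p → p ≤ (N : ℤ) - P - 1 → t p = 0 := by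
        intro p h1 h2
        set k := ((N : ℤ) - p).toNat with hkdef
        have hk1 : (k : ℤ) = (N : ℤ) - p := Int.toNat_of_nonneg (by omega)
        have hk2 : P + 1 ≤ k := by omega
        have hk3 : k ≤ N - P - 1 := by omega
        have hww : ww N ^ (-p) = ww N ^ (k : ℕ) := by
          have hNeg : ww N ^ (-(N : ℤ)) = 1 := by rw [zpow_neg, hwN, inv_one]
          rw [show -p = (k : ℤ) + (-(N : ℤ)) by omega, zpow_add₀ hw0, hNeg, mul_one, zpow_natCast]
        simp only [htdef]
        rw [hww, hgap k hk2 hk3, zero_mul]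
      have hA : ∑ p ∈ Finset.Icc (-(P : ℤ)) P, t p = ∑ k ∈ range N, t k := by
        have e1 := sum_shift_int (-(P : ℤ)) (2 * P) t
        rw [show (-(P : ℤ) + ((2 * P : ℕ) : ℤ)) = (P : ℤ) by push_cast; ring] at e1
        have e2 : ∑ k ∈ range (2 * P + 1), t (-(P : ℤ) + k) = ∑ k ∈ range N, t (-(P : ℤ) + k) := by
          apply Finset.sum_subset (Finset.range_subset_range.mpr (by omega))
          intro k hk hk2
          simp only [Finset.mem_range] at hk hk2
          exact ht_gap _ (by omega) (by omega)
        rw [e1, e2, shift_sum ht_per]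
      have hB : ∑ k ∈ range N, t (k : ℤ) = (N : ℂ) * gC.coeff (n : ℕ) := by
        have expand : ∀ k : ℕ, t (k : ℤ)
            = ∑ m ∈ range N, gC.coeff m * (ww N ^ ((((n : ℕ) : ℤ) - m))) ^ (k : ℕ) := by
          intro k
          simp only [htdef]
          rw [eval_eq_sum_range' hgClt, Finset.sum_mul]
          apply Finset.sum_congr rfl
          intro m hm
          rw [mul_assoc]
          congr 1
          rw [← zpow_natCast (ww N ^ (-(k : ℤ))) m, ← zpow_mul,
            ← zpow_natCast (ww N ^ ((((n : ℕ) : ℤ) - m))) k, ← zpow_mul, ← zpow_add₀ hw0]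
          congr 1
          push_cast
          ring
        rw [Finset.sum_congr rfl fun k _ => expand k, Finset.sum_comm]
        have inner : ∀ m ∈ range N, (∑ k ∈ range N,
            gC.coeff m * (ww N ^ ((((n : ℕ) : ℤ) - m))) ^ k)
            = if m = (n : ℕ) then (N : ℂ) * gC.coeff m else 0 := by
          intro m hm
          simp only [Finset.mem_range] at hm
          rw [← Finset.mul_sum]
          have hζN : (ww N ^ ((((n : ℕ) : ℤ) - m))) ^ N = 1 := by
            rw [← zpow_natCast, ← zpow_mul, mul_comm, zpow_mul, hwN, one_zpow]
          rw [sum_pow_root _ hζN]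
          by_cases hmn : m = (n : ℕ)
          · rw [if_pos hmn, hmn, sub_self, zpow_zero, if_pos rfl]
            ring
          · rw [if_neg hmn]
            have hne : ww N ^ ((((n : ℕ) : ℤ) - m)) ≠ 1 := by
              rw [Ne, hprim.zpow_eq_one_iff_dvd]
              rintro ⟨e, he⟩
              have hb1 : (((n : ℕ) : ℤ) - m) < N := by
                have := n.isLt; omega
              have hb2 : -(N : ℤ) < (((n : ℕ) : ℤ) - m) := by omega
              have hb3 : (((n : ℕ) : ℤ) - m) ≠ 0 := by
                intro h
                apply hmn
                omega
              have hNpos' : (0 : ℤ) < N := by exact_mod_cast hNpos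
              have he1 : e < 1 := by nlinarith
              have he2 : -1 < e := by nlinarith
              have : e = 0 := by omega
              rw [this, mul_zero] at he
              exact hb3 he
            rw [if_neg hne, mul_zero]
        rw [Finset.sum_congr rfl inner,
          Finset.sum_ite_eq' (range N) ((n : ℕ)) (fun m => (N : ℂ) * gC.coeff m),
          if_pos (Finset.mem_range.mpr n.isLt)]
      have hNC : (N : ℂ) ≠ 0 := Nat.cast_ne_zero.mpr hN0
      calc ((y n : ℝ) : ℂ) = gC.coeff (n : ℕ) := by
            rw [hy, hcoeffC]
            push_cast
            ring
        _ = ((N : ℂ) * gC.coeff (n : ℕ)) / N := by field_simp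
        _ = (∑ p ∈ Finset.Icc (-(P : ℤ)) P, t p) / N := by rw [hA, hB]
        _ = ∑ p ∈ Finset.Icc (-(P : ℤ)) (P : ℤ),
              gC.eval (ww N ^ (-p)) / N * Complex.exp (2 * Real.pi * Complex.I * (n : ℕ) * p / N) := by
            rw [Finset.sum_div]
            apply Finset.sum_congr rfl
            intro p _
            rw [ww_exp_nat, htdef]
            ring
  have h0PBL : IsPBLSample P N (fun _ => 0) := ⟨fun _ => 0, by simp, by simp⟩
  have hint : ∀ n : Fin N, ∃ k : ℤ, y n - (fun _ : Fin N => (0 : ℝ)) n = k :=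
    fun n => ⟨g.coeff (n : ℕ), by simp [hy]⟩
  obtain ⟨cc, hcc⟩ := hid y (fun _ => 0) hyPBL h0PBL hint
  have hcoeffcc : ∀ m : ℕ, m < N → gC.coeff m = ((cc : ℤ) : ℂ) := by
    intro m hm
    have h1 := hcc ⟨m, hm⟩
    simp only [hy, sub_zero] at h1
    rw [hcoeffC]
    exact_mod_cast h1
  set k₀ := N / d with hk₀
  have hNk : N = k₀ * d := (Nat.div_mul_cancel hdN).symm
  have hprimζ : IsPrimitiveRoot (ww N ^ k₀) d := hprim.pow hNpos hNk
  have hζ1 : ww N ^ k₀ ≠ 1 := by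
    intro h
    rw [h] at hprimζ
    have := IsPrimitiveRoot.one.unique hprimζ
    omega
  have hζN : (ww N ^ k₀) ^ N = 1 := by
    rw [← pow_mul, mul_comm, pow_mul, hprim.pow_eq_one, one_pow]
  have heval0 : gC.eval (ww N ^ k₀) = 0 := by
    rw [eval_eq_sum_range' hgClt,
      Finset.sum_congr rfl (fun m hm => by rw [hcoeffcc m (Finset.mem_range.mp hm)]),
      ← Finset.mul_sum, sum_pow_root _ hζN, if_neg hζ1, mul_zero]
  have hevalne : gC.eval (ww N ^ k₀) ≠ 0 := by
    rw [hgC, eval_prod]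
    apply Finset.prod_ne_zero_iff.mpr
    intro e he
    rw [Finset.mem_erase, Nat.mem_divisors] at he
    obtain ⟨hed, heN, -⟩ := he
    have he0 : e ≠ 0 := fun h => hN0 (by rw [h] at heN; exact Nat.eq_zero_of_zero_dvd heN)
    intro hzero
    haveI : NeZero e := ⟨he0⟩
    have hpe : IsPrimitiveRoot (ww N ^ k₀) e := isRoot_cyclotomic_iff.mp hzero
    exact hed (hpe.unique hprimζ)
  exact hevalne heval0

/-- the PBL samples are identifiable up to an integer constant vector iff
for every divisor d > 1 of N there is n with P+1 ≤ n ≤ N−P−1 such that e^{2πin/N} is a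
root of the d-th cyclotomic polynomial. -/
theorem stmt12 (P N : ℕ) (hP : 1 ≤ P) (hN : 2 * P + 1 < N) :
    PBLIdentifiable P N ↔
      ∀ d : ℕ, d ∣ N → 1 < d →
        ∃ n : ℕ, P + 1 ≤ n ∧ n ≤ N - P - 1 ∧
          (Polynomial.cyclotomic d ℂ).IsRoot
            (Complex.exp (2 * Real.pi * Complex.I * n / N)) := by
  exact ⟨fun h => forward_dir hP hN h, fun h => backward_dir hP hN h⟩
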